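/- Let M ∈ ℝ^{4n×4n} be a JRS-symmetric matrix. Then there exists an orthogonally JRS-symplectic matrix W ∈ ℝ^{4n×4n} such that Wᵀ M W = T is a real JRS-Schur form, i.e., T has the block partitioning T = [[T₀,T₂,T₁,T₃],[−T₂,T₀,T₃,−T₁],[−T₁,−T₃,T₀,T₂],[−T₃,T₁,−T₂,T₀]], where T₀ ∈ ℝ^{n×n} is upper quasi-triangular (upper Hessenberg with no two consecutive nonzero subdiagonal entries) and T₁, T₂, T₃ ∈ ℝ^{n×n} are upper triangular. -/

import Mathlib

open Matrix Quaternion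
open scoped Kronecker Quaternion

noncomputable section

/-- The 4×4 coefficient matrix of `J`. -/
def Jb : Matrix (Fin 4) (Fin 4) ℝ := !![0,0,-1,0; 0,0,0,-1; 1,0,0,0; 0,1,0,0]
/-- The 4×4 coefficient matrix of `R`. -/
def Rb : Matrix (Fin 4) (Fin 4) ℝ := !![0,-1,0,0; 1,0,0,0; 0,0,0,1; 0,0,-1,0]
/-- The 4×4 coefficient matrix of `S`. -/
def Sb : Matrix (Fin 4) (Fin 4) ℝ := !![0,0,0,-1; 0,0,1,0; 0,-1,0,0; 1,0,0,0]

/-- `J_n = [[0,0,−I_n,0],[0,0,0,−I_n],[I_n,0,0,0],[0,I_n,0,0]]`. -/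
def JJ (n : ℕ) : Matrix (Fin 4 × Fin n) (Fin 4 × Fin n) ℝ :=
  Jb ⊗ₖ (1 : Matrix (Fin n) (Fin n) ℝ)
/-- `R_n = [[0,−I_n,0,0],[I_n,0,0,0],[0,0,0,I_n],[0,0,−I_n,0]]`. -/
def RRm (n : ℕ) : Matrix (Fin 4 × Fin n) (Fin 4 × Fin n) ℝ :=
  Rb ⊗ₖ (1 : Matrix (Fin n) (Fin n) ℝ)
/-- `S_n = [[0,0,0,−I_n],[0,0,I_n,0],[0,−I_n,0,0],[I_n,0,0,0]]`. -/
def SSm (n : ℕ) : Matrix (Fin 4 × Fin n) (Fin 4 × Fin n) ℝ :=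
  Sb ⊗ₖ (1 : Matrix (Fin n) (Fin n) ℝ)

/-- A real 4m×4n matrix `M` is JRS-symmetric if `J_m M J_nᵀ = M`,
`R_m M R_nᵀ = M` and `S_m M S_nᵀ = M`. -/
def JRSSymmetric {m n : ℕ} (M : Matrix (Fin 4 × Fin m) (Fin 4 × Fin n) ℝ) : Prop :=
  JJ m * M * (JJ n)ᵀ = M ∧ RRm m * M * (RRm n)ᵀ = M ∧ SSm m * M * (SSm n)ᵀ = M

/-- A real 4m×4n matrix `O` is JRS-symplectic if `O J_n Oᵀ = J_m`,
`O R_n Oᵀ = R_m` and `O S_n Oᵀ = S_m`. -/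
def JRSSymplectic {m n : ℕ} (O : Matrix (Fin 4 × Fin m) (Fin 4 × Fin n) ℝ) : Prop :=
  O * JJ n * Oᵀ = JJ m ∧ O * RRm n * Oᵀ = RRm m ∧ O * SSm n * Oᵀ = SSm m

/-- A real 4n×4n matrix is orthogonally JRS-symplectic if it is orthogonal
and JRS-symplectic. -/
def OrthoJRSSymplectic {n : ℕ} (W : Matrix (Fin 4 × Fin n) (Fin 4 × Fin n) ℝ) : Prop :=
  Wᵀ * W = 1 ∧ JRSSymplectic W

/-- The 4m×4n block matrix
`[[Q₀,Q₂,Q₁,Q₃],[−Q₂,Q₀,Q₃,−Q₁],[−Q₁,−Q₃,Q₀,Q₂],[−Q₃,Q₁,−Q₂,Q₀]]`. -/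
def upsilonBlocks {m n : ℕ} (Q0 Q1 Q2 Q3 : Matrix (Fin m) (Fin n) ℝ) :
    Matrix (Fin 4 × Fin m) (Fin 4 × Fin n) ℝ := fun p q =>
  !![Q0 p.2 q.2, Q2 p.2 q.2, Q1 p.2 q.2, Q3 p.2 q.2;
     -(Q2 p.2 q.2), Q0 p.2 q.2, Q3 p.2 q.2, -(Q1 p.2 q.2);
     -(Q1 p.2 q.2), -(Q3 p.2 q.2), Q0 p.2 q.2, Q2 p.2 q.2;
     -(Q3 p.2 q.2), Q1 p.2 q.2, -(Q2 p.2 q.2), Q0 p.2 q.2] p.1 q.1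

/-- The real counterpart `Υ_Q` of a quaternion matrix `Q`. -/
def Upsilon {m n : ℕ} (Q : Matrix (Fin m) (Fin n) ℍ[ℝ]) :
    Matrix (Fin 4 × Fin m) (Fin 4 × Fin n) ℝ :=
  upsilonBlocks (fun i j => (Q i j).re) (fun i j => (Q i j).imI)
    (fun i j => (Q i j).imJ) (fun i j => (Q i j).imK)

/-- Upper Hessenberg: zero below the first subdiagonal. -/
def UpperHessenbergM {n : ℕ} (A : Matrix (Fin n) (Fin n) ℝ) : Prop :=
  ∀ i j : Fin n, (j : ℕ) + 1 < (i : ℕ) → A i j = 0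

/-- Upper triangular: zero below the diagonal. -/
def UpperTriangularM {m n : ℕ} (A : Matrix (Fin m) (Fin n) ℝ) : Prop :=
  ∀ (i : Fin m) (j : Fin n), (j : ℕ) < (i : ℕ) → A i j = 0

/-- Strictly upper triangular: zero on and below the diagonal. -/
def StrictlyUpperTriangularM {m n : ℕ} (A : Matrix (Fin m) (Fin n) ℝ) : Prop :=
  ∀ (i : Fin m) (j : Fin n), (j : ℕ) ≤ (i : ℕ) → A i j = 0

/-- Tridiagonal: zero outside the three central diagonals. -/
def TridiagonalM {n : ℕ} (A : Matrix (Fin n) (Fin n) ℝ) : Prop :=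
  ∀ i j : Fin n, ((i : ℕ) + 1 < (j : ℕ) ∨ (j : ℕ) + 1 < (i : ℕ)) → A i j = 0

set_option maxHeartbeats 1000000
/-- The 4×4 real matrix of a quaternion in the Υ-pattern. -/
def Bq (q : ℍ[ℝ]) : Matrix (Fin 4) (Fin 4) ℝ :=
  !![q.re, q.imJ, q.imI, q.imK;
     -q.imJ, q.re, q.imK, -q.imI;
     -q.imI, -q.imK, q.re, q.imJ;
     -q.imK, q.imI, -q.imJ, q.re]

lemma upsilon_apply {m n : ℕ} (Q : Matrix (Fin m) (Fin n) ℍ[ℝ]) (p : Fin 4 × Fin m)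
    (r : Fin 4 × Fin n) : Upsilon Q p r = Bq (Q p.2 r.2) p.1 r.1 := rfl

lemma Bq_zero : Bq 0 = 0 := by
  ext a b; fin_cases a <;> fin_cases b <;>
    simp [Bq, Matrix.vecHead, Matrix.vecTail]

lemma Bq_one : Bq 1 = 1 := by
  ext a b; fin_cases a <;> fin_cases b <;>
    simp [Bq, Matrix.one_apply, Matrix.vecHead, Matrix.vecTail]

lemma Bq_add (p q : ℍ[ℝ]) : Bq (p + q) = Bq p + Bq q := by
  ext a b; fin_cases a <;> fin_cases b <;> simp [Bq] <;> ring

lemma Bq_mul (p q : ℍ[ℝ]) : Bq (p * q) = Bq p * Bq q := by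
  ext a b
  fin_cases a <;> fin_cases b <;>
    simp [Bq, Matrix.mul_apply, Fin.sum_univ_four, Quaternion.re_mul, Quaternion.imI_mul,
      Quaternion.imJ_mul, Quaternion.imK_mul] <;> ring

lemma Bq_star (q : ℍ[ℝ]) (a b : Fin 4) : Bq (star q) a b = Bq q b a := by
  fin_cases a <;> fin_cases b <;> simp [Bq]

/-- entry of the sandwiched product -/
lemma conj_entry {m n : ℕ} (C D : Matrix (Fin 4) (Fin 4) ℝ)
    (X : Matrix (Fin 4 × Fin m) (Fin 4 × Fin n) ℝ) (a b : Fin 4) (i : Fin m) (j : Fin n) :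
    ((C ⊗ₖ (1 : Matrix (Fin m) (Fin m) ℝ)) * X
      * ((D ⊗ₖ (1 : Matrix (Fin n) (Fin n) ℝ)))ᵀ) (a, i) (b, j)
    = ∑ c, ∑ d, C a c * X (c, i) (d, j) * D b d := by
  simp only [Matrix.mul_apply, Matrix.transpose_apply, kroneckerMap_apply, Matrix.one_apply,
    Fintype.sum_prod_type, mul_ite, mul_one, mul_zero, ite_mul, zero_mul,
    Finset.sum_ite_eq, Finset.sum_ite_eq', Finset.mem_univ, if_true]
  rw [Finset.sum_comm]
  refine Finset.sum_congr rfl fun d _ => ?_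
  rw [Finset.sum_mul]

lemma sandwich_eq {m n : ℕ} (C : Matrix (Fin 4) (Fin 4) ℝ)
    (h : ∀ (q : ℍ[ℝ]) (a b : Fin 4), (∑ c, ∑ d, C a c * Bq q c d * C b d) = Bq q a b)
    (Q : Matrix (Fin m) (Fin n) ℍ[ℝ]) :
    (C ⊗ₖ (1 : Matrix (Fin m) (Fin m) ℝ)) * Upsilon Q
      * ((C ⊗ₖ (1 : Matrix (Fin n) (Fin n) ℝ)))ᵀ = Upsilon Q := by
  funext p r
  obtain ⟨a, i⟩ := p
  obtain ⟨b, j⟩ := r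
  rw [conj_entry, upsilon_apply]
  simp only [upsilon_apply]
  exact h (Q i j) a b

lemma Jb_sandwich : ∀ (q : ℍ[ℝ]) (a b : Fin 4),
    (∑ c, ∑ d, Jb a c * Bq q c d * Jb b d) = Bq q a b := by
  intro q a b
  fin_cases a <;> fin_cases b <;>
    simp [Jb, Bq, Fin.sum_univ_four, Matrix.vecHead, Matrix.vecTail]

lemma Rb_sandwich : ∀ (q : ℍ[ℝ]) (a b : Fin 4),
    (∑ c, ∑ d, Rb a c * Bq q c d * Rb b d) = Bq q a b := by
  intro q a b
  fin_cases a <;> fin_cases b <;>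
    simp [Rb, Bq, Fin.sum_univ_four, Matrix.vecHead, Matrix.vecTail]

lemma Sb_sandwich : ∀ (q : ℍ[ℝ]) (a b : Fin 4),
    (∑ c, ∑ d, Sb a c * Bq q c d * Sb b d) = Bq q a b := by
  intro q a b
  fin_cases a <;> fin_cases b <;>
    simp [Sb, Bq, Fin.sum_univ_four, Matrix.vecHead, Matrix.vecTail]

lemma upsilon_jrs {m n : ℕ} (Q : Matrix (Fin m) (Fin n) ℍ[ℝ]) : JRSSymmetric (Upsilon Q) :=
  ⟨sandwich_eq Jb Jb_sandwich Q, sandwich_eq Rb Rb_sandwich Q, sandwich_eq Sb Sb_sandwich Q⟩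

def BqHom (a b : Fin 4) : ℍ[ℝ] →+ ℝ where
  toFun q := Bq q a b
  map_zero' := by show Bq 0 a b = 0; rw [Bq_zero]; rfl
  map_add' p q := by show Bq (p + q) a b = Bq p a b + Bq q a b; rw [Bq_add]; rfl

lemma upsilon_one {n : ℕ} : Upsilon (1 : Matrix (Fin n) (Fin n) ℍ[ℝ]) = 1 := by
  funext p r
  obtain ⟨a, i⟩ := p
  obtain ⟨b, j⟩ := r
  rw [upsilon_apply]
  by_cases h : i = j
  · subst h
    rw [Matrix.one_apply_eq, Bq_one]
    by_cases hab : a = b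
    · subst hab; rw [Matrix.one_apply_eq, Matrix.one_apply_eq]
    · rw [Matrix.one_apply_ne hab, Matrix.one_apply_ne (by simp [Prod.ext_iff, hab])]
  · rw [Matrix.one_apply_ne h, Bq_zero, Matrix.zero_apply,
      Matrix.one_apply_ne (by simp [Prod.ext_iff, h])]

lemma upsilon_mul {m n p : ℕ} (P : Matrix (Fin m) (Fin n) ℍ[ℝ])
    (Q : Matrix (Fin n) (Fin p) ℍ[ℝ]) : Upsilon (P * Q) = Upsilon P * Upsilon Q := by
  funext x y
  obtain ⟨a, i⟩ := x
  obtain ⟨b, j⟩ := y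
  rw [upsilon_apply, Matrix.mul_apply, Matrix.mul_apply, Fintype.sum_prod_type]
  rw [show Bq (∑ k, P i k * Q k j) a b = ∑ k, Bq (P i k * Q k j) a b from
    map_sum (BqHom a b) _ _]
  rw [Finset.sum_comm]
  refine Finset.sum_congr rfl fun k _ => ?_
  rw [Bq_mul, Matrix.mul_apply]
  exact Finset.sum_congr rfl fun c _ => by rw [upsilon_apply, upsilon_apply]

lemma upsilon_transpose {m n : ℕ} (Q : Matrix (Fin m) (Fin n) ℍ[ℝ]) :
    (Upsilon Q)ᵀ = Upsilon Qᴴ := by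
  funext x y
  obtain ⟨a, i⟩ := x
  obtain ⟨b, j⟩ := y
  rw [Matrix.transpose_apply, upsilon_apply, upsilon_apply, Matrix.conjTranspose_apply]
  exact (Bq_star (Q j i) a b).symm

lemma jrs_exists_quat {m n : ℕ} (M : Matrix (Fin 4 × Fin m) (Fin 4 × Fin n) ℝ)
    (hM : JRSSymmetric M) : ∃ Q : Matrix (Fin m) (Fin n) ℍ[ℝ], M = Upsilon Q := by
  obtain ⟨hJ, hR, hS⟩ := hM
  refine ⟨fun i j => ⟨M (0, i) (0, j), M (0, i) (2, j), M (0, i) (1, j), M (0, i) (3, j)⟩, ?_⟩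
  funext x y
  obtain ⟨a, i⟩ := x
  obtain ⟨b, j⟩ := y
  show M (a, i) (b, j) = Bq ⟨M (0, i) (0, j), M (0, i) (2, j), M (0, i) (1, j), M (0, i) (3, j)⟩ a b
  have hJ' : ∀ a b : Fin 4, (∑ c, ∑ d, Jb a c * M (c, i) (d, j) * Jb b d) = M (a, i) (b, j) :=
    fun a b => by rw [← conj_entry]; exact congrFun (congrFun hJ (a, i)) (b, j)
  have hR' : ∀ a b : Fin 4, (∑ c, ∑ d, Rb a c * M (c, i) (d, j) * Rb b d) = M (a, i) (b, j) :=
    fun a b => by rw [← conj_entry]; exact congrFun (congrFun hR (a, i)) (b, j)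
  have hS' : ∀ a b : Fin 4, (∑ c, ∑ d, Sb a c * M (c, i) (d, j) * Sb b d) = M (a, i) (b, j) :=
    fun a b => by rw [← conj_entry]; exact congrFun (congrFun hS (a, i)) (b, j)
  fin_cases a <;> fin_cases b
  · simp [Bq]
  · simp [Bq]
  · simp [Bq]
  · simp [Bq]
  · -- (1,0)
    have := hR' 1 0
    simp [Rb, Fin.sum_univ_four, Matrix.vecHead, Matrix.vecTail] at this
    simp [Bq]; linarith
  · have := hR' 1 1
    simp [Rb, Fin.sum_univ_four, Matrix.vecHead, Matrix.vecTail] at this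
    simp [Bq]; linarith
  · have := hR' 1 2
    simp [Rb, Fin.sum_univ_four, Matrix.vecHead, Matrix.vecTail] at this
    simp [Bq]; linarith
  · have := hR' 1 3
    simp [Rb, Fin.sum_univ_four, Matrix.vecHead, Matrix.vecTail] at this
    simp [Bq]; linarith
  · have := hJ' 2 0
    simp [Jb, Fin.sum_univ_four, Matrix.vecHead, Matrix.vecTail] at this
    simp [Bq]; linarith
  · have := hJ' 2 1
    simp [Jb, Fin.sum_univ_four, Matrix.vecHead, Matrix.vecTail] at this
    simp [Bq]; linarith
  · have := hJ' 2 2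
    simp [Jb, Fin.sum_univ_four, Matrix.vecHead, Matrix.vecTail] at this
    simp [Bq]; linarith
  · have := hJ' 2 3
    simp [Jb, Fin.sum_univ_four, Matrix.vecHead, Matrix.vecTail] at this
    simp [Bq]; linarith
  · have := hS' 3 0
    simp [Sb, Fin.sum_univ_four, Matrix.vecHead, Matrix.vecTail] at this
    simp [Bq]; linarith
  · have := hS' 3 1
    simp [Sb, Fin.sum_univ_four, Matrix.vecHead, Matrix.vecTail] at this
    simp [Bq]; linarith
  · have := hS' 3 2
    simp [Sb, Fin.sum_univ_four, Matrix.vecHead, Matrix.vecTail] at this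
    simp [Bq]; linarith
  · have := hS' 3 3
    simp [Sb, Fin.sum_univ_four, Matrix.vecHead, Matrix.vecTail] at this
    simp [Bq]; linarith

lemma Jb_orth : Jb * Jbᵀ = 1 ∧ Jbᵀ * Jb = 1 := by
  constructor <;>
  · ext a b
    fin_cases a <;> fin_cases b <;>
      simp [Jb, Matrix.mul_apply, Fin.sum_univ_four, Matrix.vecHead, Matrix.vecTail,
        Matrix.one_apply]

lemma Rb_orth : Rb * Rbᵀ = 1 ∧ Rbᵀ * Rb = 1 := by
  constructor <;>
  · ext a b
    fin_cases a <;> fin_cases b <;>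
      simp [Rb, Matrix.mul_apply, Fin.sum_univ_four, Matrix.vecHead, Matrix.vecTail,
        Matrix.one_apply]

lemma Sb_orth : Sb * Sbᵀ = 1 ∧ Sbᵀ * Sb = 1 := by
  constructor <;>
  · ext a b
    fin_cases a <;> fin_cases b <;>
      simp [Sb, Matrix.mul_apply, Fin.sum_univ_four, Matrix.vecHead, Matrix.vecTail,
        Matrix.one_apply]

set_option maxHeartbeats 1000000
def cToQ : ℂ →+* ℍ[ℝ] where
  toFun c := ⟨c.re, c.im, 0, 0⟩
  map_one' := by ext <;> simp
  map_mul' x y := by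
    show (⟨(x*y).re, (x*y).im, 0, 0⟩ : ℍ[ℝ]) = ⟨x.re, x.im, 0, 0⟩ * ⟨y.re, y.im, 0, 0⟩
    ext <;> simp [Quaternion.re_mul, Quaternion.imI_mul, Quaternion.imJ_mul, Quaternion.imK_mul] <;> ring
  map_zero' := by ext <;> simp
  map_add' x y := by
    show (⟨(x+y).re, (x+y).im, 0, 0⟩ : ℍ[ℝ]) = ⟨x.re, x.im, 0, 0⟩ + ⟨y.re, y.im, 0, 0⟩
    ext <;> simp

def qmodC : Module ℂ ℍ[ℝ] where
  smul c q := q * cToQ c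
  one_smul q := by show q * cToQ 1 = q; simp
  mul_smul x y q := by
    show q * cToQ (x * y) = (q * cToQ y) * cToQ x
    rw [mul_comm x y, _root_.map_mul, mul_assoc]
  smul_zero c := zero_mul _
  smul_add c x y := add_mul x y _
  add_smul c d q := by show q * cToQ (c + d) = q * _ + q * _; rw [map_add, mul_add]
  zero_smul q := by show q * cToQ 0 = 0; simp

attribute [local instance] qmodC

lemma csmul_def (c : ℂ) (q : ℍ[ℝ]) : c • q = q * cToQ c := rfl

lemma qfinC : FiniteDimensional ℂ ℍ[ℝ] := by
  refine Module.Finite.of_fg_top (Submodule.fg_def.mpr ⟨{1, @id ℍ[ℝ] ⟨0,0,1,0⟩}, Set.toFinite _, ?_⟩)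
  rw [eq_top_iff]
  rintro q -
  rw [Submodule.mem_span_pair]
  refine ⟨⟨q.re, q.imI⟩, ⟨q.imJ, -q.imK⟩, ?_⟩
  show (1 * ⟨q.re, q.imI, 0, 0⟩ + ⟨0,0,1,0⟩ * ⟨q.imJ, -q.imK, 0, 0⟩ : QuaternionAlgebra ℝ (-1) 0 (-1)) = q
  ext <;> simp [csmul_def, cToQ, Quaternion.re_mul, Quaternion.imI_mul,
    Quaternion.imJ_mul, Quaternion.imK_mul]

attribute [local instance] qfinC

lemma exists_eigen {n : ℕ} (Q : Matrix (Fin (n+1)) (Fin (n+1)) ℍ[ℝ]) :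
    ∃ (v : Fin (n+1) → ℍ[ℝ]) (q : ℍ[ℝ]), v ≠ 0 ∧ Q *ᵥ v = fun i => v i * q := by
  let f : Module.End ℂ (Fin (n+1) → ℍ[ℝ]) :=
    { toFun := fun v => Q *ᵥ v
      map_add' := fun x y => Matrix.mulVec_add Q x y
      map_smul' := fun c v => by
        funext i
        simp only [Matrix.mulVec, dotProduct, Pi.smul_apply, csmul_def, RingHom.id_apply,
          Finset.sum_mul, mul_assoc] }
  obtain ⟨c, hc⟩ := Module.End.exists_eigenvalue f
  obtain ⟨v, hv⟩ := hc.exists_hasEigenvector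
  refine ⟨v, cToQ c, hv.2, funext fun i => ?_⟩
  exact congrFun hv.apply_eq_smul i

lemma exists_unitary_col {n : ℕ} (w : Fin (n+1) → ℍ[ℝ])
    (hw : ∑ i, star (w i) * w i = 1) :
    ∃ U : Matrix (Fin (n+1)) (Fin (n+1)) ℍ[ℝ], Uᴴ * U = 1 ∧ ∀ i, U i 0 = w i := by
  classical
  set a : ℝ := ‖w 0‖ with ha
  have ha0 : 0 ≤ a := norm_nonneg _
  set β : ℍ[ℝ] := if w 0 = 0 then 1 else -(a⁻¹ • w 0) with hβ
  have hns : star (w 0) * w 0 = ((a * a : ℝ) : ℍ[ℝ]) := by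
    rw [Quaternion.star_mul_self, ← Quaternion.normSq_eq_norm_mul_self]
  have hβ1 : star β * β = 1 := by
    by_cases h : w 0 = 0
    · simp [hβ, h]
    · have han : a ≠ 0 := by simpa [ha] using h
      rw [hβ, if_neg h]
      rw [star_neg, Quaternion.star_smul, neg_mul, mul_neg, neg_neg, smul_mul_assoc, mul_smul_comm,
        hns, smul_smul, Quaternion.smul_coe]
      rw [show a⁻¹ * a⁻¹ * (a * a) = 1 by field_simp]
      exact Quaternion.coe_one
  have hβw : star β * w 0 = ((-a : ℝ) : ℍ[ℝ]) := by
    by_cases h : w 0 = 0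
    · simp [hβ, h, ha]
    · have han : a ≠ 0 := by simpa [ha] using h
      rw [hβ, if_neg h, star_neg, Quaternion.star_smul, neg_mul, smul_mul_assoc, hns, Quaternion.smul_coe]
      rw [show a⁻¹ * (a * a) = a by field_simp]
      simp
  have hwβ : star (w 0) * β = ((-a : ℝ) : ℍ[ℝ]) := by
    by_cases h : w 0 = 0
    · simp [hβ, h, ha]
    · have han : a ≠ 0 := by simpa [ha] using h
      rw [hβ, if_neg h, mul_neg, mul_smul_comm, hns, Quaternion.smul_coe]
      rw [show a⁻¹ * (a * a) = a by field_simp]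
      simp
  set ρ : ℝ := 1 + a with hρdef
  have hρ : ρ ≠ 0 := by positivity
  set u : Fin (n+1) → ℍ[ℝ] := fun i => w i - if i = 0 then β else 0 with hu
  have huw : ∑ i, star (u i) * w i = ((ρ : ℝ) : ℍ[ℝ]) := by
    have h1 : ∀ i, star (u i) * w i
        = star (w i) * w i - (if i = 0 then star β * w i else 0) := by
      intro i; by_cases h : i = 0 <;> simp [hu, h, sub_mul]
    rw [Finset.sum_congr rfl fun i _ => h1 i, Finset.sum_sub_distrib, hw,
      Finset.sum_ite_eq' Finset.univ (0 : Fin (n+1)) (fun i => star β * w i)]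
    simp only [Finset.mem_univ, if_true, hβw]
    rw [← Quaternion.coe_one, ← Quaternion.coe_sub]
    norm_num [hρdef]
  have huu : ∑ i, star (u i) * u i = ((2 * ρ : ℝ) : ℍ[ℝ]) := by
    have h1 : ∀ i, star (u i) * u i
        = star (w i) * w i - (if i = 0 then star β * w i else 0)
          - ((if i = 0 then star (w i) * β else 0) - (if i = 0 then star β * β else 0)) := by
      intro i; by_cases h : i = 0 <;> simp [hu, h, sub_mul, mul_sub]
    rw [Finset.sum_congr rfl fun i _ => h1 i, Finset.sum_sub_distrib, Finset.sum_sub_distrib,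
      Finset.sum_sub_distrib, hw,
      Finset.sum_ite_eq' Finset.univ (0 : Fin (n+1)) (fun i => star β * w i),
      Finset.sum_ite_eq' Finset.univ (0 : Fin (n+1)) (fun i => star (w i) * β),
      Finset.sum_ite_eq' Finset.univ (0 : Fin (n+1)) (fun i => star β * β)]
    simp only [Finset.mem_univ, if_true, hβw, hwβ, hβ1]
    rw [← Quaternion.coe_one, ← Quaternion.coe_sub, ← Quaternion.coe_sub, ← Quaternion.coe_sub]
    rw [Quaternion.coe_inj]
    ring
  set P : Matrix (Fin (n+1)) (Fin (n+1)) ℍ[ℝ] := vecMulVec u (fun j => star (u j)) with hP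
  have hPP : P * P = (2 * ρ) • P := by
    refine Matrix.ext fun i j => ?_
    rw [Matrix.mul_apply]
    simp only [hP, vecMulVec_apply, Matrix.smul_apply]
    have h1 : ∀ k, (u i * star (u k)) * (u k * star (u j))
        = u i * ((star (u k) * u k) * star (u j)) := by
      intro k; rw [mul_assoc (u i) (star (u k)), ← mul_assoc (star (u k))]
    rw [Finset.sum_congr rfl fun k _ => h1 k, ← Finset.mul_sum, ← Finset.sum_mul, huu,
      Quaternion.coe_mul_eq_smul, mul_smul_comm]
  set H : Matrix (Fin (n+1)) (Fin (n+1)) ℍ[ℝ] := 1 - ρ⁻¹ • P with hH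
  have hHH : H * H = 1 := by
    rw [hH, sub_mul, one_mul, mul_sub, mul_one, smul_mul_assoc, mul_smul_comm, hPP, smul_smul,
      smul_smul]
    rw [show ρ⁻¹ * ρ⁻¹ * (2 * ρ) = 2 * ρ⁻¹ by field_simp]
    rw [show (2 * ρ⁻¹) • P = ρ⁻¹ • P + ρ⁻¹ • P by rw [← add_smul]; ring_nf]
    abel
  have hHherm : Hᴴ = H := by
    refine Matrix.ext fun i j => ?_
    simp only [hH, conjTranspose_apply, Matrix.sub_apply, Matrix.smul_apply, Matrix.one_apply,
      hP, vecMulVec_apply, star_sub, Quaternion.star_smul, StarMul.star_mul, star_star]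
    by_cases h : i = j <;> simp [h, eq_comm]
  have hPw : P *ᵥ w = ρ • u := by
    funext i
    simp only [Matrix.mulVec, dotProduct, hP, vecMulVec_apply, Pi.smul_apply]
    rw [Finset.sum_congr rfl fun k _ => mul_assoc (u i) (star (u k)) (w k), ← Finset.mul_sum,
      huw, Quaternion.mul_coe_eq_smul]
  have hHw : H *ᵥ w = fun i => if i = 0 then β else 0 := by
    rw [hH, Matrix.sub_mulVec, Matrix.one_mulVec, Matrix.smul_mulVec, hPw, smul_smul,
      inv_mul_cancel₀ hρ, one_smul]
    funext i
    by_cases h : i = 0 <;> simp [hu, h]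
  set D : Matrix (Fin (n+1)) (Fin (n+1)) ℍ[ℝ] := diagonal (fun i => if i = 0 then β else 1)
    with hD
  have hDD : Dᴴ * D = 1 := by
    rw [hD, diagonal_conjTranspose, diagonal_mul_diagonal]
    have : (fun i : Fin (n+1) => (star fun i => if i = 0 then β else 1) i
        * (if i = 0 then β else 1)) = fun _ => (1 : ℍ[ℝ]) := by
      funext i
      by_cases h : i = 0 <;> simp [h, hβ1]
    rw [this]
    exact Matrix.diagonal_one
  refine ⟨H * D, ?_, ?_⟩
  · rw [Matrix.conjTranspose_mul, hHherm, mul_assoc, ← mul_assoc H H D, hHH, one_mul, hDD]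
  · intro i
    have hw' : (H *ᵥ (H *ᵥ w)) i = w i := by
      rw [Matrix.mulVec_mulVec, hHH, Matrix.one_mulVec]
    rw [hHw] at hw'
    have : (H * D) i 0 = H i 0 * β := by
      rw [Matrix.mul_diagonal]; simp
    rw [this, ← hw']
    simp [Matrix.mulVec, dotProduct, Finset.sum_ite_eq']

/-- The index equivalence `Fin 1 ⊕ Fin n ≃ Fin (n+1)`. -/
def finSplit (n : ℕ) : Fin 1 ⊕ Fin n ≃ Fin (n + 1) :=
  finSumFinEquiv.trans (finCongr (Nat.add_comm 1 n))

lemma finSplit_inl (n : ℕ) (x : Fin 1) : ((finSplit n) (Sum.inl x) : ℕ) = 0 := by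
  simp [finSplit]

lemma finSplit_inr (n : ℕ) (x : Fin n) : ((finSplit n) (Sum.inr x) : ℕ) = (x : ℕ) + 1 := by
  simp [finSplit]

theorem quatSchur (n : ℕ) (Q : Matrix (Fin n) (Fin n) ℍ[ℝ]) :
    ∃ U : Matrix (Fin n) (Fin n) ℍ[ℝ], Uᴴ * U = 1 ∧
      ∀ i j : Fin n, (j : ℕ) < (i : ℕ) → (Uᴴ * Q * U) i j = 0 := by
  induction n with
  | zero => exact ⟨1, by simp, fun i j _ => i.elim0⟩
  | succ n ih =>
    obtain ⟨v, q, hv0, hv⟩ := exists_eigen Q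
    have hspos : 0 < ∑ i, normSq (v i) := by
      obtain ⟨i, hi⟩ := Function.ne_iff.mp hv0
      refine Finset.sum_pos' (fun i _ => normSq_nonneg) ⟨i, Finset.mem_univ i, ?_⟩
      exact lt_of_le_of_ne normSq_nonneg (Ne.symm (normSq_ne_zero.mpr hi))
    set s : ℝ := Real.sqrt (∑ i, normSq (v i)) with hs
    have hs0 : s ≠ 0 := ne_of_gt (Real.sqrt_pos.mpr hspos)
    set w : Fin (n+1) → ℍ[ℝ] := fun i => (s⁻¹ : ℝ) • v i with hwdef
    have hw : ∑ i, star (w i) * w i = 1 := by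
      have h1 : ∀ i, star (w i) * w i = ((s⁻¹ * s⁻¹ * normSq (v i) : ℝ) : ℍ[ℝ]) := by
        intro i
        rw [hwdef, Quaternion.star_smul, smul_mul_assoc, mul_smul_comm, smul_smul,
          Quaternion.star_mul_self, Quaternion.smul_coe]
      rw [Finset.sum_congr rfl fun i _ => h1 i]
      have hcs : ∑ i, ((s⁻¹ * s⁻¹ * normSq (v i) : ℝ) : ℍ[ℝ])
          = (((∑ i, s⁻¹ * s⁻¹ * normSq (v i) : ℝ)) : ℍ[ℝ]) :=
        (map_sum (algebraMap ℝ ℍ[ℝ]) _ _).symm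
      rw [hcs, ← Finset.mul_sum, show (∑ i, normSq (v i)) = s * s from
        (Real.mul_self_sqrt hspos.le).symm,
        show s⁻¹ * s⁻¹ * (s * s) = 1 from by field_simp]
      exact Quaternion.coe_one
    have hQw : Q *ᵥ w = fun i => w i * q := by
      funext i
      show ∑ k, Q i k * (s⁻¹ • v k) = (s⁻¹ • v i) * q
      rw [smul_mul_assoc, Finset.sum_congr rfl fun k _ => mul_smul_comm s⁻¹ (Q i k) (v k),
        ← Finset.smul_sum]
      have h2 := congrFun hv i
      simp only [Matrix.mulVec, dotProduct] at h2
      rw [h2]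
    obtain ⟨U, hU, hUcol⟩ := exists_unitary_col w hw
    set A : Matrix (Fin (n+1)) (Fin (n+1)) ℍ[ℝ] := Uᴴ * Q * U with hA
    have hAcol : ∀ i : Fin (n+1), i ≠ 0 → A i 0 = 0 := by
      intro i hi
      have hQU : ∀ l, (Q * U) l 0 = w l * q := by
        intro l
        rw [Matrix.mul_apply, Finset.sum_congr rfl fun k _ => by rw [hUcol k]]
        exact congrFun hQw l
      have h3 : A i 0 = (∑ l, star (U l i) * w l) * q := by
        rw [hA, mul_assoc, Matrix.mul_apply]
        rw [Finset.sum_congr rfl fun l _ => by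
          rw [hQU l, Matrix.conjTranspose_apply, ← mul_assoc]]
        rw [← Finset.sum_mul]
      have h4 : ∑ l, star (U l i) * w l = 0 := by
        have h5 : ∑ l, star (U l i) * w l = (Uᴴ * U) i 0 := by
          rw [Matrix.mul_apply]
          exact Finset.sum_congr rfl fun l _ => by
            rw [Matrix.conjTranspose_apply, hUcol l]
        rw [h5, hU, Matrix.one_apply_ne hi]
      rw [h3, h4, zero_mul]
    -- reindex and recurse
    set e := finSplit n with he
    set B := A.submatrix e e with hB
    have hAB : A = B.submatrix e.symm e.symm := by
      rw [hB, Matrix.submatrix_submatrix]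
      simp [Equiv.self_comp_symm]
    have hB21 : B.toBlocks₂₁ = 0 := by
      funext i x
      have h0 : (e (Sum.inl x)) = (0 : Fin (n+1)) := by
        apply Fin.ext
        simpa using finSplit_inl n x
      have hne : (e (Sum.inr i)) ≠ (0 : Fin (n+1)) := by
        intro hcon
        have := finSplit_inr n i
        rw [hcon] at this
        simp at this
      show B (Sum.inr i) (Sum.inl x) = 0
      rw [hB, Matrix.submatrix_apply, h0]
      exact hAcol _ hne
    obtain ⟨V', hV', hV'tri⟩ := ih (B.toBlocks₂₂)
    set Vb : Matrix (Fin 1 ⊕ Fin n) (Fin 1 ⊕ Fin n) ℍ[ℝ] := fromBlocks 1 0 0 V' with hVb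
    set V : Matrix (Fin (n+1)) (Fin (n+1)) ℍ[ℝ] := Vb.submatrix e.symm e.symm with hV
    have hVbU : Vbᴴ * Vb = 1 := by
      rw [hVb, Matrix.fromBlocks_conjTranspose, Matrix.fromBlocks_multiply]
      simp [hV']
    have hVU : Vᴴ * V = 1 := by
      rw [hV, Matrix.conjTranspose_submatrix, Matrix.submatrix_mul_equiv, hVbU,
        Matrix.submatrix_one_equiv]
    refine ⟨U * V, ?_, ?_⟩
    · rw [Matrix.conjTranspose_mul, mul_assoc, ← mul_assoc Uᴴ U V, hU, one_mul, hVU]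
    · intro i j hij
      have hform : (U * V)ᴴ * Q * (U * V) = Vᴴ * (A * V) := by
        rw [Matrix.conjTranspose_mul, hA]
        simp only [mul_assoc]
      have hblocks : Vᴴ * (A * V)
          = (fromBlocks B.toBlocks₁₁ (B.toBlocks₁₂ * V') 0
              (V'ᴴ * B.toBlocks₂₂ * V')).submatrix e.symm e.symm := by
        rw [hAB, hV, Matrix.conjTranspose_submatrix, Matrix.submatrix_mul_equiv,
          Matrix.submatrix_mul_equiv]
        congr 1
        rw [← Matrix.fromBlocks_toBlocks B, hB21, hVb, Matrix.fromBlocks_conjTranspose,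
          Matrix.fromBlocks_multiply, Matrix.fromBlocks_multiply]
        simp [Matrix.fromBlocks_toBlocks, mul_assoc]
      rw [hform, hblocks, Matrix.submatrix_apply]
      have hival : ∀ x : Fin 1, e.symm i = Sum.inl x → (i : ℕ) = 0 := by
        intro x hx
        have : i = e (Sum.inl x) := (Equiv.symm_apply_eq e).mp hx
        rw [this]
        exact finSplit_inl n x
      have hival' : ∀ x : Fin n, e.symm i = Sum.inr x → (i : ℕ) = (x : ℕ) + 1 := by
        intro x hx
        have : i = e (Sum.inr x) := (Equiv.symm_apply_eq e).mp hx
        rw [this]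
        exact finSplit_inr n x
      have hjval : ∀ x : Fin 1, e.symm j = Sum.inl x → (j : ℕ) = 0 := by
        intro x hx
        have : j = e (Sum.inl x) := (Equiv.symm_apply_eq e).mp hx
        rw [this]
        exact finSplit_inl n x
      have hjval' : ∀ x : Fin n, e.symm j = Sum.inr x → (j : ℕ) = (x : ℕ) + 1 := by
        intro x hx
        have : j = e (Sum.inr x) := (Equiv.symm_apply_eq e).mp hx
        rw [this]
        exact finSplit_inr n x
      rcases hsi : e.symm i with x | i' <;> rcases hsj : e.symm j with y | j'
      · exact absurd hij (by rw [hival x hsi]; omega)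
      · exact absurd hij (by rw [hival x hsi]; omega)
      · simp
      · exact hV'tri i' j' (by have h6 := hival' i' hsi; have h7 := hjval' j' hsj; omega)


lemma kron_transpose {m n : ℕ} (A : Matrix (Fin 4) (Fin 4) ℝ)
    (B : Matrix (Fin m) (Fin n) ℝ) : (A ⊗ₖ B)ᵀ = Aᵀ ⊗ₖ Bᵀ := by
  funext x y
  rfl

lemma big_orth {n : ℕ} (C : Matrix (Fin 4) (Fin 4) ℝ) (h1 : C * Cᵀ = 1) (h2 : Cᵀ * C = 1) :
    (C ⊗ₖ (1 : Matrix (Fin n) (Fin n) ℝ)) * (C ⊗ₖ (1 : Matrix (Fin n) (Fin n) ℝ))ᵀ = 1 ∧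
    (C ⊗ₖ (1 : Matrix (Fin n) (Fin n) ℝ))ᵀ * (C ⊗ₖ (1 : Matrix (Fin n) (Fin n) ℝ)) = 1 := by
  rw [kron_transpose, Matrix.transpose_one, ← Matrix.mul_kronecker_mul,
    ← Matrix.mul_kronecker_mul, h1, h2, mul_one, Matrix.one_kronecker_one]
  exact ⟨rfl, rfl⟩

lemma sympl_of_symm_orth {n : ℕ} (W : Matrix (Fin 4 × Fin n) (Fin 4 × Fin n) ℝ)
    (hsymm : JRSSymmetric W) (horth : Wᵀ * W = 1) : JRSSymplectic W := by
  have hWWt : W * Wᵀ = 1 := mul_eq_one_comm.mp horth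
  obtain ⟨hJ, hR, hS⟩ := hsymm
  have key : ∀ X : Matrix (Fin 4 × Fin n) (Fin 4 × Fin n) ℝ,
      X * W * Xᵀ = W → Xᵀ * X = 1 → W * X * Wᵀ = X := by
    intro X hX hXo
    have hcomm : W * X = X * W := by
      calc W * X = (X * W * Xᵀ) * X := by rw [hX]
        _ = X * W * (Xᵀ * X) := by rw [mul_assoc]
        _ = X * W := by rw [hXo, mul_one]
    calc W * X * Wᵀ = X * W * Wᵀ := by rw [hcomm]
      _ = X * (W * Wᵀ) := by rw [mul_assoc]
      _ = X := by rw [hWWt, mul_one]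
  exact ⟨key _ hJ (big_orth Jb Jb_orth.1 Jb_orth.2).2,
    key _ hR (big_orth Rb Rb_orth.1 Rb_orth.2).2,
    key _ hS (big_orth Sb Sb_orth.1 Sb_orth.2).2⟩


/-- Real JRS-Schur form: every JRS-symmetric matrix is
orthogonally JRS-symplectically similar to a real JRS-Schur form, i.e. `T₀`
is upper quasi-triangular and `T₁, T₂, T₃` are upper triangular. -/
theorem jrs_schur_decomposition {n : ℕ}
    (M : Matrix (Fin 4 × Fin n) (Fin 4 × Fin n) ℝ) (hM : JRSSymmetric M) :
    ∃ (W : Matrix (Fin 4 × Fin n) (Fin 4 × Fin n) ℝ)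
      (T0 T1 T2 T3 : Matrix (Fin n) (Fin n) ℝ),
      OrthoJRSSymplectic W ∧
      Wᵀ * M * W = upsilonBlocks T0 T1 T2 T3 ∧
      UpperHessenbergM T0 ∧
      (∀ (s : ℕ) (h : s + 2 < n),
        T0 ⟨s + 1, by omega⟩ ⟨s, by omega⟩ = 0 ∨ T0 ⟨s + 2, h⟩ ⟨s + 1, by omega⟩ = 0) ∧
      UpperTriangularM T1 ∧ UpperTriangularM T2 ∧ UpperTriangularM T3 := by
  obtain ⟨Q, rfl⟩ := jrs_exists_quat M hM
  obtain ⟨U, hU, htri⟩ := quatSchur n Q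
  have horth : (Upsilon U)ᵀ * Upsilon U = 1 := by
    rw [upsilon_transpose, ← upsilon_mul, hU, upsilon_one]
  refine ⟨Upsilon U, fun i j => ((Uᴴ * Q * U) i j).re, fun i j => ((Uᴴ * Q * U) i j).imI,
    fun i j => ((Uᴴ * Q * U) i j).imJ, fun i j => ((Uᴴ * Q * U) i j).imK,
    ⟨horth, sympl_of_symm_orth _ (upsilon_jrs U) horth⟩, ?_, ?_, ?_, ?_, ?_, ?_⟩
  · rw [upsilon_transpose, ← upsilon_mul, ← upsilon_mul]
    rfl
  · intro i j h
    show ((Uᴴ * Q * U) i j).re = 0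
    rw [htri i j (by omega)]
    rfl
  · intro s h
    left
    show ((Uᴴ * Q * U) ⟨s + 1, by omega⟩ ⟨s, by omega⟩).re = 0
    rw [htri _ _ (Nat.lt_succ_self s)]
    rfl
  · intro i j h
    show ((Uᴴ * Q * U) i j).imI = 0
    rw [htri i j h]
    rfl
  · intro i j h
    show ((Uᴴ * Q * U) i j).imJ = 0
    rw [htri i j h]
    rfl
  · intro i j h
    show ((Uᴴ * Q * U) i j).imK = 0
    rw [htri i j h]
    rfl
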